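/- Let (i,j,k,ι) ∈ Λ, let V = k^2 with basis v1, v2, and let c : V⊗V → V⊗V be the linear map defined as follows. If k = 0: c(v1⊗v1) = (−1)^{(ι+1)j} ξ^{ij} v1⊗v1; c(v1⊗v2) = (−1)^{jι} ξ^{(i+2)j} v2⊗v1 + [(−1)^{(ι+1)j} ξ^{ij} + (−1)^{(j−1)ι} ξ^{(i+2)j}] v1⊗v2; c(v2⊗v1) = (−1)^{(ι+1)(j−1)} ξ^{ij} v1⊗v2; c(v2⊗v2) = (−1)^{(j−1)ι} ξ^{(i+2)j} v2⊗v2 + (1−ξ^2)^{−1} (−1)^{ι(j−1)} ξ^{(j−2)i+2j−1} (ξ^j − (−1)^ι) v1⊗v1. If k = 1: c(v1⊗v1) = (−1)^{(j−1)(ι+1)} ξ^{ij} v1⊗v1; c(v1⊗v2) = (−1)^{(j−1)ι} ξ^{(i+2)j} v2⊗v1 + [(−1)^{(j−1)(ι+1)} ξ^{ij} + (−1)^{jι} ξ^{(i+2)j}] v1⊗v2; c(v2⊗v1) = (−1)^{(ι+1)j} ξ^{ij} v1⊗v2; c(v2⊗v2) = (−1)^{jι} ξ^{(i+2)j} v2⊗v2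 + (1−ξ^2)^{−1} (−1)^{jι} ξ^{2j+2+ij+4i} (ξ^j + (−1)^ι) v1⊗v1. Then c is a bijection and satisfies the braid equation (c⊗id)(id⊗c)(c⊗id) = (id⊗c)(c⊗id)(id⊗c) on V⊗V⊗V. -/

import Mathlib

/- STATEMENT 9: for (i,j,k,ι) ∈ Λ, the prescribed linear map c on (k²)⊗(k²) (the braiding of
the Yetter–Drinfeld module V_{i,j,k,ι}) is bijective and satisfies the braid equation. -/

open scoped TensorProduct

namespace Paper24

/-- Membership of `(i,j,k,ι)` in the index set `Λ`: `j + 3k ≢ 3(ι+1) mod 6`. -/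
def inLambda (i j kk ι : ℕ) : Prop :=
  i < 6 ∧ j < 6 ∧ kk < 2 ∧ ι < 2 ∧
    ((j : ZMod 6) + 3 * (kk : ZMod 6) ≠ 3 * ((ι : ZMod 6) + 1))

/-- The first basis vector `v₁` of `k²`. -/
noncomputable def e₁ (k : Type) [Field k] : Fin 2 → k := ![1, 0]
/-- The second basis vector `v₂` of `k²`. -/
noncomputable def e₂ (k : Type) [Field k] : Fin 2 → k := ![0, 1]

end Paper24

open Paper24


section Aux

variable (k : Type) [Field k]

private lemma negone_zpow_even (p p' : ℤ) (h : Even (p - p')) :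
    ((-1 : k)) ^ p = (-1 : k) ^ p' := by
  obtain ⟨m, hm⟩ := h
  have hp : p = p' + 2 * m := by linarith
  rw [hp, zpow_add₀ (by norm_num : (-1:k) ≠ 0), zpow_mul]
  norm_num

private lemma negone_zpow_odd (p p' : ℤ) (h : Odd (p - p')) :
    ((-1 : k)) ^ p = -((-1 : k) ^ p') := by
  obtain ⟨m, hm⟩ := h
  have hp : p = p' + 2 * m + 1 := by linarith
  rw [hp, zpow_add₀ (by norm_num : (-1:k) ≠ 0), zpow_add₀ (by norm_num : (-1:k) ≠ 0),
    zpow_mul]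
  norm_num

private lemma mul_eq_of_even (y : k) (p p' : ℤ) (h : Even (p - p')) :
    ((-1:k)) ^ p * y = (-1:k) ^ p' * y := by rw [negone_zpow_even k p p' h]

private lemma mul_eq_neg_of_odd (y : k) (p p' : ℤ) (h : Odd (p - p')) :
    ((-1:k)) ^ p * y = -((-1:k) ^ p' * y) := by rw [negone_zpow_odd k p p' h, neg_mul]

set_option maxHeartbeats 3200000 in
set_option synthInstance.maxHeartbeats 400000 in
private theorem main_aux (a e z bb d : k) (ha : a ≠ 0) (he : e ≠ 0)
    (c : ((Fin 2 → k) ⊗[k] (Fin 2 → k)) →ₗ[k] ((Fin 2 → k) ⊗[k] (Fin 2 → k)))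
    (h11 : c (e₁ k ⊗ₜ[k] e₁ k) = a • (e₁ k ⊗ₜ[k] e₁ k))
    (h12 : c (e₁ k ⊗ₜ[k] e₂ k) = bb • (e₂ k ⊗ₜ[k] e₁ k) + (a + e) • (e₁ k ⊗ₜ[k] e₂ k))
    (h21 : c (e₂ k ⊗ₜ[k] e₁ k) = d • (e₁ k ⊗ₜ[k] e₂ k))
    (h22 : c (e₂ k ⊗ₜ[k] e₂ k) = e • (e₂ k ⊗ₜ[k] e₂ k) + z • (e₁ k ⊗ₜ[k] e₁ k))
    (hsign : (d = a ∧ bb = -e) ∨ (d = -a ∧ bb = e)) :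
    Function.Bijective c ∧
    (LinearMap.rTensor (Fin 2 → k) c ∘ₗ
        ((TensorProduct.assoc k (Fin 2 → k) (Fin 2 → k) (Fin 2 → k)).symm.toLinearMap ∘ₗ
          LinearMap.lTensor (Fin 2 → k) c ∘ₗ
          (TensorProduct.assoc k (Fin 2 → k) (Fin 2 → k) (Fin 2 → k)).toLinearMap) ∘ₗ
        LinearMap.rTensor (Fin 2 → k) c
      = ((TensorProduct.assoc k (Fin 2 → k) (Fin 2 → k) (Fin 2 → k)).symm.toLinearMap ∘ₗ
          LinearMap.lTensor (Fin 2 → k) c ∘ₗ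
          (TensorProduct.assoc k (Fin 2 → k) (Fin 2 → k) (Fin 2 → k)).toLinearMap) ∘ₗ
        LinearMap.rTensor (Fin 2 → k) c ∘ₗ
        ((TensorProduct.assoc k (Fin 2 → k) (Fin 2 → k) (Fin 2 → k)).symm.toLinearMap ∘ₗ
          LinearMap.lTensor (Fin 2 → k) c ∘ₗ
          (TensorProduct.assoc k (Fin 2 → k) (Fin 2 → k) (Fin 2 → k)).toLinearMap)) := by
  classical
  have hd0 : d ≠ 0 := by rcases hsign with ⟨hd, _⟩ | ⟨hd, _⟩ <;> subst hd <;> simpa using ha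
  have hb0' : bb ≠ 0 := by
    rcases hsign with ⟨_, hb⟩ | ⟨_, hb⟩ <;> subst hb <;> simpa using he
  set bV : Module.Basis (Fin 2) k (Fin 2 → k) := Pi.basisFun k (Fin 2) with hbV
  have hb0 : bV 0 = e₁ k := by ext x; fin_cases x <;> simp [hbV, e₁]
  have hb1 : bV 1 = e₂ k := by ext x; fin_cases x <;> simp [hbV, e₂]
  set B2 : Module.Basis (Fin 2 × Fin 2) k ((Fin 2 → k) ⊗[k] (Fin 2 → k)) :=
    bV.tensorProduct bV with hB2
  have hB : ∀ p q : Fin 2, B2 (p, q) = bV p ⊗ₜ[k] bV q := fun p q =>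
    Module.Basis.tensorProduct_apply bV bV p q
  set g : Fin 2 × Fin 2 → ((Fin 2 → k) ⊗[k] (Fin 2 → k)) := fun p =>
    ![![a⁻¹ • (e₁ k ⊗ₜ[k] e₁ k), d⁻¹ • (e₂ k ⊗ₜ[k] e₁ k)],
      ![bb⁻¹ • (e₁ k ⊗ₜ[k] e₂ k) - ((a + e) * (bb * d)⁻¹) • (e₂ k ⊗ₜ[k] e₁ k),
        e⁻¹ • (e₂ k ⊗ₜ[k] e₂ k) - (z * (e * a)⁻¹) • (e₁ k ⊗ₜ[k] e₁ k)]] p.1 p.2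
    with hg
  set cinv : ((Fin 2 → k) ⊗[k] (Fin 2 → k)) →ₗ[k] ((Fin 2 → k) ⊗[k] (Fin 2 → k)) :=
    B2.constr k g with hcinv
  have hc00 : cinv (e₁ k ⊗ₜ[k] e₁ k) = a⁻¹ • (e₁ k ⊗ₜ[k] e₁ k) := by
    have := B2.constr_basis k g (0, 0)
    rw [hB, hb0] at this
    simpa only [hg, Matrix.cons_val_zero, Matrix.cons_val_one, Matrix.head_cons] using this
  have hc01 : cinv (e₁ k ⊗ₜ[k] e₂ k) = d⁻¹ • (e₂ k ⊗ₜ[k] e₁ k) := by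
    have := B2.constr_basis k g (0, 1)
    rw [hB, hb0, hb1] at this
    simpa only [hg, Matrix.cons_val_zero, Matrix.cons_val_one, Matrix.head_cons] using this
  have hc10 : cinv (e₂ k ⊗ₜ[k] e₁ k) =
      bb⁻¹ • (e₁ k ⊗ₜ[k] e₂ k) - ((a + e) * (bb * d)⁻¹) • (e₂ k ⊗ₜ[k] e₁ k) := by
    have := B2.constr_basis k g (1, 0)
    rw [hB, hb0, hb1] at this
    simpa only [hg, Matrix.cons_val_zero, Matrix.cons_val_one, Matrix.head_cons] using this
  have hc11 : cinv (e₂ k ⊗ₜ[k] e₂ k) =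
      e⁻¹ • (e₂ k ⊗ₜ[k] e₂ k) - (z * (e * a)⁻¹) • (e₁ k ⊗ₜ[k] e₁ k) := by
    have := B2.constr_basis k g (1, 1)
    rw [hB, hb1] at this
    simpa only [hg, Matrix.cons_val_zero, Matrix.cons_val_one, Matrix.head_cons] using this
  constructor
  · rw [Function.bijective_iff_has_inverse]
    refine ⟨cinv, ?_, ?_⟩
    · have hcomp : cinv ∘ₗ c = LinearMap.id := by
        refine Module.Basis.ext B2 ?_
        rintro ⟨p, q⟩
        fin_cases p <;> fin_cases q <;>
          · rw [hB]
            simp only [Fin.mk_zero, Fin.mk_one, hb0, hb1, LinearMap.comp_apply, LinearMap.id_apply,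
              h11, h12, h21, h22, map_add, map_smul, hc00, hc01, hc10, hc11]
            match_scalars <;> field_simp <;> try ring
      intro x
      have := LinearMap.congr_fun hcomp x
      simpa using this
    · have hcomp : c ∘ₗ cinv = LinearMap.id := by
        refine Module.Basis.ext B2 ?_
        rintro ⟨p, q⟩
        fin_cases p <;> fin_cases q <;>
          · rw [hB]
            simp only [Fin.mk_zero, Fin.mk_one, hb0, hb1, LinearMap.comp_apply, LinearMap.id_apply,
              hc00, hc01, hc10, hc11, map_add, map_smul, map_sub,
              h11, h12, h21, h22]
            match_scalars <;> field_simp <;> try ring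
      intro x
      have := LinearMap.congr_fun hcomp x
      simpa using this
  · set B3 : Module.Basis ((Fin 2 × Fin 2) × Fin 2) k
        (((Fin 2 → k) ⊗[k] (Fin 2 → k)) ⊗[k] (Fin 2 → k)) := B2.tensorProduct bV with hB3
    refine Module.Basis.ext B3 ?_
    rintro ⟨⟨p, q⟩, r⟩
    have hB3a : B3 ((p, q), r) = (bV p ⊗ₜ[k] bV q) ⊗ₜ[k] bV r := by
      rw [hB3, Module.Basis.tensorProduct_apply, hB]
    rw [hB3a]
    rcases hsign with ⟨hd, hb⟩ | ⟨hd, hb⟩ <;> subst hd <;> subst hb <;>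
      fin_cases p <;> fin_cases q <;> fin_cases r <;>
      · simp only [Fin.mk_zero, Fin.mk_one, hb0, hb1, LinearMap.comp_apply, LinearEquiv.coe_coe,
          LinearMap.rTensor_tmul, LinearMap.lTensor_tmul,
          TensorProduct.assoc_tmul, TensorProduct.assoc_symm_tmul,
          h11, h12, h21, h22, map_add, map_smul,
          TensorProduct.add_tmul, TensorProduct.tmul_add,
          ← TensorProduct.smul_tmul', TensorProduct.tmul_smul,
          smul_add, smul_smul]
        try match_scalars <;> ring

end Aux

theorem stmt_9 (k : Type) [Field k] [IsAlgClosed k] [CharZero k]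
    (ξ : k) (hξ : IsPrimitiveRoot ξ 6)
    (i j kk ι : ℕ) (hΛ : inLambda i j kk ι)
    (c : ((Fin 2 → k) ⊗[k] (Fin 2 → k)) →ₗ[k] ((Fin 2 → k) ⊗[k] (Fin 2 → k)))
    -- the values of c in the case k = 0
    (h0 : kk = 0 →
      (c (e₁ k ⊗ₜ[k] e₁ k)
          = ((-1 : k) ^ (((ι : ℤ) + 1) * (j : ℤ)) * ξ ^ ((i : ℤ) * (j : ℤ))) •
              (e₁ k ⊗ₜ[k] e₁ k) ∧
       c (e₁ k ⊗ₜ[k] e₂ k)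
          = ((-1 : k) ^ ((j : ℤ) * (ι : ℤ)) * ξ ^ (((i : ℤ) + 2) * (j : ℤ))) •
              (e₂ k ⊗ₜ[k] e₁ k)
            + ((-1 : k) ^ (((ι : ℤ) + 1) * (j : ℤ)) * ξ ^ ((i : ℤ) * (j : ℤ))
               + (-1 : k) ^ (((j : ℤ) - 1) * (ι : ℤ)) * ξ ^ (((i : ℤ) + 2) * (j : ℤ))) •
              (e₁ k ⊗ₜ[k] e₂ k) ∧
       c (e₂ k ⊗ₜ[k] e₁ k)
          = ((-1 : k) ^ (((ι : ℤ) + 1) * ((j : ℤ) - 1)) * ξ ^ ((i : ℤ) * (j : ℤ))) •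
              (e₁ k ⊗ₜ[k] e₂ k) ∧
       c (e₂ k ⊗ₜ[k] e₂ k)
          = ((-1 : k) ^ (((j : ℤ) - 1) * (ι : ℤ)) * ξ ^ (((i : ℤ) + 2) * (j : ℤ))) •
              (e₂ k ⊗ₜ[k] e₂ k)
            + ((1 - ξ ^ 2)⁻¹ * (-1 : k) ^ ((ι : ℤ) * ((j : ℤ) - 1))
                * ξ ^ (((j : ℤ) - 2) * (i : ℤ) + 2 * (j : ℤ) - 1)
                * (ξ ^ (j : ℤ) - (-1 : k) ^ (ι : ℤ))) •
              (e₁ k ⊗ₜ[k] e₁ k)))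
    -- the values of c in the case k = 1
    (h1 : kk = 1 →
      (c (e₁ k ⊗ₜ[k] e₁ k)
          = ((-1 : k) ^ (((j : ℤ) - 1) * ((ι : ℤ) + 1)) * ξ ^ ((i : ℤ) * (j : ℤ))) •
              (e₁ k ⊗ₜ[k] e₁ k) ∧
       c (e₁ k ⊗ₜ[k] e₂ k)
          = ((-1 : k) ^ (((j : ℤ) - 1) * (ι : ℤ)) * ξ ^ (((i : ℤ) + 2) * (j : ℤ))) •
              (e₂ k ⊗ₜ[k] e₁ k)
            + ((-1 : k) ^ (((j : ℤ) - 1) * ((ι : ℤ) + 1)) * ξ ^ ((i : ℤ) * (j : ℤ))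
               + (-1 : k) ^ ((j : ℤ) * (ι : ℤ)) * ξ ^ (((i : ℤ) + 2) * (j : ℤ))) •
              (e₁ k ⊗ₜ[k] e₂ k) ∧
       c (e₂ k ⊗ₜ[k] e₁ k)
          = ((-1 : k) ^ (((ι : ℤ) + 1) * (j : ℤ)) * ξ ^ ((i : ℤ) * (j : ℤ))) •
              (e₁ k ⊗ₜ[k] e₂ k) ∧
       c (e₂ k ⊗ₜ[k] e₂ k)
          = ((-1 : k) ^ ((j : ℤ) * (ι : ℤ)) * ξ ^ (((i : ℤ) + 2) * (j : ℤ))) •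
              (e₂ k ⊗ₜ[k] e₂ k)
            + ((1 - ξ ^ 2)⁻¹ * (-1 : k) ^ ((j : ℤ) * (ι : ℤ))
                * ξ ^ (2 * (j : ℤ) + 2 + (i : ℤ) * (j : ℤ) + 4 * (i : ℤ))
                * (ξ ^ (j : ℤ) + (-1 : k) ^ (ι : ℤ))) •
              (e₁ k ⊗ₜ[k] e₁ k))) :
    Function.Bijective c ∧
    (LinearMap.rTensor (Fin 2 → k) c ∘ₗ
        ((TensorProduct.assoc k (Fin 2 → k) (Fin 2 → k) (Fin 2 → k)).symm.toLinearMap ∘ₗ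
          LinearMap.lTensor (Fin 2 → k) c ∘ₗ
          (TensorProduct.assoc k (Fin 2 → k) (Fin 2 → k) (Fin 2 → k)).toLinearMap) ∘ₗ
        LinearMap.rTensor (Fin 2 → k) c
      = ((TensorProduct.assoc k (Fin 2 → k) (Fin 2 → k) (Fin 2 → k)).symm.toLinearMap ∘ₗ
          LinearMap.lTensor (Fin 2 → k) c ∘ₗ
          (TensorProduct.assoc k (Fin 2 → k) (Fin 2 → k) (Fin 2 → k)).toLinearMap) ∘ₗ
        LinearMap.rTensor (Fin 2 → k) c ∘ₗ
        ((TensorProduct.assoc k (Fin 2 → k) (Fin 2 → k) (Fin 2 → k)).symm.toLinearMap ∘ₗ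
          LinearMap.lTensor (Fin 2 → k) c ∘ₗ
          (TensorProduct.assoc k (Fin 2 → k) (Fin 2 → k) (Fin 2 → k)).toLinearMap)) := by
  obtain ⟨hi6, hj6, hk2, hι2, -⟩ := hΛ
  have hξ0 : ξ ≠ 0 := hξ.ne_zero (by norm_num)
  have hmne : ∀ (p p' q : ℤ), Odd (p - p') →
      ((-1:k)) ^ p * ξ ^ q = -((-1:k) ^ p' * ξ ^ q) :=
    fun p p' q h => mul_eq_neg_of_odd k _ p p' h
  have hme : ∀ (p p' q : ℤ), Even (p - p') →
      ((-1:k)) ^ p * ξ ^ q = (-1:k) ^ p' * ξ ^ q :=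
    fun p p' q h => mul_eq_of_even k _ p p' h
  have hnz : ∀ (p q : ℤ), ((-1:k)) ^ p * ξ ^ q ≠ 0 := fun p q =>
    mul_ne_zero (zpow_ne_zero p (by norm_num)) (zpow_ne_zero q hξ0)
  interval_cases kk
  · obtain ⟨H11, H12, H21, H22⟩ := h0 rfl
    interval_cases ι
    · refine main_aux k _ _ _ _ _ (hnz _ _) (hnz _ _) c H11 H12 H21 H22 ?_
      refine Or.inr ⟨?_, ?_⟩
      · push_cast
        exact hmne _ _ _ ⟨-1, by ring⟩
      · push_cast
        exact hme _ _ _ ⟨0, by ring⟩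
    · refine main_aux k _ _ _ _ _ (hnz _ _) (hnz _ _) c H11 H12 H21 H22 ?_
      refine Or.inl ⟨?_, ?_⟩
      · push_cast
        exact hme _ _ _ ⟨-1, by ring⟩
      · push_cast
        exact hmne _ _ _ ⟨0, by ring⟩
  · obtain ⟨H11, H12, H21, H22⟩ := h1 rfl
    interval_cases ι
    · refine main_aux k _ _ _ _ _ (hnz _ _) (hnz _ _) c H11 H12 H21 H22 ?_
      refine Or.inr ⟨?_, ?_⟩
      · push_cast
        exact hmne _ _ _ ⟨0, by ring⟩
      · push_cast
        exact hme _ _ _ ⟨0, by ring⟩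
    · refine main_aux k _ _ _ _ _ (hnz _ _) (hnz _ _) c H11 H12 H21 H22 ?_
      refine Or.inl ⟨?_, ?_⟩
      · push_cast
        exact hme _ _ _ ⟨1, by ring⟩
      · push_cast
        exact hmne _ _ _ ⟨-1, by ring⟩
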